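/- The singular virtual braid monoid decomposes as SVB_n = SVP_n ⋊ S_n, where SVP_n is the kernel of θ : SVB_n → S_n and S_n acts on SVP_n by π · X_{i,j}^{ε} = X_{π(i),π(j)}^{ε} and π · Y_{i,j} = Y_{π(i),π(j)}. -/

import Mathlib

namespace SVBPaper

/-- Generators of the singular virtual braid monoid: `s i` is `σ_i`, `si i` is `σ_i⁻¹`,
`r i` is `ρ_i`, `t i` is `τ_i`, for `1 ≤ i ≤ n-1` (encoded as `i : Fin (n-1)`). -/
inductive SVBGen (n : ℕ) : Type
  | s  : Fin (n - 1) → SVBGen n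
  | si : Fin (n - 1) → SVBGen n
  | r  : Fin (n - 1) → SVBGen n
  | t  : Fin (n - 1) → SVBGen n

/-- The index of a generator. -/
def SVBGen.idx {n : ℕ} : SVBGen n → Fin (n - 1)
  | s i => i
  | si i => i
  | r i => i
  | t i => i

/-- `|i - j| ≥ 2`. -/
def Far {n : ℕ} (i j : Fin (n - 1)) : Prop := (i : ℕ) + 2 ≤ j ∨ (j : ℕ) + 2 ≤ i

/-- The defining relations of the singular virtual braid monoid `SVB_n`. -/
inductive SVBRel (n : ℕ) : FreeMonoid (SVBGen n) → FreeMonoid (SVBGen n) → Prop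
  | comm (x y : SVBGen n) (h : Far x.idx y.idx) :
      SVBRel n (.of x * .of y) (.of y * .of x)
  | inv_right (i : Fin (n - 1)) : SVBRel n (.of (.s i) * .of (.si i)) 1
  | inv_left (i : Fin (n - 1)) : SVBRel n (.of (.si i) * .of (.s i)) 1
  | rho_sq (i : Fin (n - 1)) : SVBRel n (.of (.r i) * .of (.r i)) 1
  | braid_s (i : Fin (n - 1)) (h : (i : ℕ) + 1 < n - 1) :
      SVBRel n (.of (.s i) * .of (.s ⟨i + 1, h⟩) * .of (.s i))
        (.of (.s ⟨i + 1, h⟩) * .of (.s i) * .of (.s ⟨i + 1, h⟩))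
  | braid_r (i : Fin (n - 1)) (h : (i : ℕ) + 1 < n - 1) :
      SVBRel n (.of (.r i) * .of (.r ⟨i + 1, h⟩) * .of (.r i))
        (.of (.r ⟨i + 1, h⟩) * .of (.r i) * .of (.r ⟨i + 1, h⟩))
  | mixed_rs (i : Fin (n - 1)) (h : (i : ℕ) + 1 < n - 1) :
      SVBRel n (.of (.r i) * .of (.s ⟨i + 1, h⟩) * .of (.r i))
        (.of (.r ⟨i + 1, h⟩) * .of (.s i) * .of (.r ⟨i + 1, h⟩))
  | mixed_rt (i : Fin (n - 1)) (h : (i : ℕ) + 1 < n - 1) :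
      SVBRel n (.of (.r i) * .of (.t ⟨i + 1, h⟩) * .of (.r i))
        (.of (.r ⟨i + 1, h⟩) * .of (.t i) * .of (.r ⟨i + 1, h⟩))
  | ts (i : Fin (n - 1)) : SVBRel n (.of (.t i) * .of (.s i)) (.of (.s i) * .of (.t i))
  | sst (i : Fin (n - 1)) (h : (i : ℕ) + 1 < n - 1) :
      SVBRel n (.of (.s i) * .of (.s ⟨i + 1, h⟩) * .of (.t i))
        (.of (.t ⟨i + 1, h⟩) * .of (.s i) * .of (.s ⟨i + 1, h⟩))

/-- The singular virtual braid monoid on `n` strands. -/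
abbrev SVB (n : ℕ) : Type := PresentedMonoid (SVBRel n)

/-- `σ_i` in `SVB_n`. -/
def sσ {n : ℕ} (i : Fin (n - 1)) : SVB n := PresentedMonoid.of (SVBRel n) (.s i)
/-- `σ_i⁻¹` in `SVB_n`. -/
def sσi {n : ℕ} (i : Fin (n - 1)) : SVB n := PresentedMonoid.of (SVBRel n) (.si i)
/-- `ρ_i` in `SVB_n`. -/
def sρ {n : ℕ} (i : Fin (n - 1)) : SVB n := PresentedMonoid.of (SVBRel n) (.r i)
/-- `τ_i` in `SVB_n`. -/
def sτ {n : ℕ} (i : Fin (n - 1)) : SVB n := PresentedMonoid.of (SVBRel n) (.t i)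

/-- The `i`-th strand, as an element of `Fin n`. -/
def stA {n : ℕ} (i : Fin (n - 1)) : Fin n := ⟨i, by have := i.isLt; omega⟩
/-- The `(i+1)`-st strand, as an element of `Fin n`. -/
def stB {n : ℕ} (i : Fin (n - 1)) : Fin n := ⟨(i : ℕ) + 1, by have := i.isLt; omega⟩

/-- The transposition `(i, i+1)` in the symmetric group `S_n`. -/
def swapAdj {n : ℕ} (i : Fin (n - 1)) : Equiv.Perm (Fin n) := Equiv.swap (stA i) (stB i)


/-- `ρ_k` in `SVB_n`, indexed by a natural number (`1` if out of range). -/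
def rhoN {n : ℕ} (k : ℕ) : SVB n := if h : k < n - 1 then sρ ⟨k, h⟩ else 1
/-- `σ_k^{ε}` in `SVB_n` (`ε = true` is `σ_k`, `ε = false` is `σ_k⁻¹`). -/
def sigN {n : ℕ} (ε : Bool) (k : ℕ) : SVB n :=
  if h : k < n - 1 then (if ε then sσ ⟨k, h⟩ else sσi ⟨k, h⟩) else 1
/-- `τ_k` in `SVB_n`, indexed by a natural number. -/
def tauN {n : ℕ} (k : ℕ) : SVB n := if h : k < n - 1 then sτ ⟨k, h⟩ else 1
/-- The list `[ρ_{a+1}, …, ρ_{b-1}]`. -/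
def chain (n : ℕ) (a b : ℕ) : List (SVB n) := (List.range' (a + 1) (b - a - 1)).map rhoN

/-- The pure generator `X_{i,j}^{ε}` of `SVP_n`:
for `i < j` it is `ρ_{j-1} ⋯ ρ_{i+1} ρ_i σ_i^ε ρ_i ρ_{i+1} ⋯ ρ_{j-1}`, and
for `i > j` it is `ρ_{i-1} ⋯ ρ_{j+1} σ_j^ε ρ_{j+1} ⋯ ρ_{i-1}` (strands are `0`-indexed). -/
def Xe {n : ℕ} (i j : Fin n) (ε : Bool) : SVB n :=
  if (i : ℕ) < (j : ℕ) then
    (chain n i j).reverse.prod * rhoN i * sigN ε i * rhoN i * (chain n i j).prod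
  else
    (chain n j i).reverse.prod * sigN ε j * (chain n j i).prod

/-- The pure generator `Y_{i,j}` of `SVP_n`, given by the same formulas as `X_{i,j}`
with `τ` in place of `σ`. -/
def Ye {n : ℕ} (i j : Fin n) : SVB n :=
  if (i : ℕ) < (j : ℕ) then
    (chain n i j).reverse.prod * rhoN i * tauN i * rhoN i * (chain n i j).prod
  else
    (chain n j i).reverse.prod * tauN j * (chain n j i).prod


/-! ### Auxiliary development -/

section Aux

variable {n : ℕ}

lemma mk_rel {x y : FreeMonoid (SVBGen n)} (h : SVBRel n x y) :
    PresentedMonoid.mk (SVBRel n) x = PresentedMonoid.mk (SVBRel n) y :=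
  Quotient.sound (ConGen.Rel.of x y h)

lemma gen_comm (x y : SVBGen n) (h : Far x.idx y.idx) :
    PresentedMonoid.of (SVBRel n) x * PresentedMonoid.of (SVBRel n) y =
      PresentedMonoid.of (SVBRel n) y * PresentedMonoid.of (SVBRel n) x := by
  have := mk_rel (SVBRel.comm x y h)
  rwa [map_mul, map_mul] at this

lemma rho_rho (i : Fin (n - 1)) : sρ (n := n) i * sρ i = 1 := by
  have := mk_rel (SVBRel.rho_sq i)
  rwa [map_mul, map_one] at this

lemma sig_sigi (i : Fin (n - 1)) : sσ (n := n) i * sσi i = 1 := by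
  have := mk_rel (SVBRel.inv_right i)
  rwa [map_mul, map_one] at this

lemma sigi_sig (i : Fin (n - 1)) : sσi (n := n) i * sσ i = 1 := by
  have := mk_rel (SVBRel.inv_left i)
  rwa [map_mul, map_one] at this

lemma braid_rho (i : Fin (n - 1)) (h : (i : ℕ) + 1 < n - 1) :
    sρ (n := n) i * sρ ⟨i + 1, h⟩ * sρ i = sρ ⟨i + 1, h⟩ * sρ i * sρ ⟨i + 1, h⟩ := by
  have := mk_rel (SVBRel.braid_r i h)
  rwa [map_mul, map_mul, map_mul, map_mul] at this

lemma mix_rs (i : Fin (n - 1)) (h : (i : ℕ) + 1 < n - 1) :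
    sρ (n := n) i * sσ ⟨i + 1, h⟩ * sρ i = sρ ⟨i + 1, h⟩ * sσ i * sρ ⟨i + 1, h⟩ := by
  have := mk_rel (SVBRel.mixed_rs i h)
  rwa [map_mul, map_mul, map_mul, map_mul] at this

lemma mix_rt (i : Fin (n - 1)) (h : (i : ℕ) + 1 < n - 1) :
    sρ (n := n) i * sτ ⟨i + 1, h⟩ * sρ i = sρ ⟨i + 1, h⟩ * sτ i * sρ ⟨i + 1, h⟩ := by
  have := mk_rel (SVBRel.mixed_rt i h)
  rwa [map_mul, map_mul, map_mul, map_mul] at this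

/-! ### ℕ-indexed versions -/

lemma rhoN_sq (k : ℕ) : rhoN (n := n) k * rhoN k = 1 := by
  unfold rhoN; split
  · exact rho_rho _
  · simp

lemma rhoN_comm (k m : ℕ) (h : k + 2 ≤ m ∨ m + 2 ≤ k) :
    rhoN (n := n) k * rhoN m = rhoN m * rhoN k := by
  unfold rhoN
  split
  · split
    · exact gen_comm (.r ⟨k, by omega⟩) (.r ⟨m, by omega⟩) h
    · simp
  · simp

lemma rhoN_braid (k : ℕ) (h : k + 1 < n - 1) :
    rhoN (n := n) k * rhoN (k + 1) * rhoN k = rhoN (k + 1) * rhoN k * rhoN (k + 1) := by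
  have hk : k < n - 1 := by omega
  have : rhoN (n := n) k = sρ ⟨k, hk⟩ := by simp [rhoN, hk]
  have h2 : rhoN (n := n) (k + 1) = sρ ⟨k + 1, h⟩ := by simp [rhoN, h]
  rw [this, h2]
  exact braid_rho ⟨k, hk⟩ h

lemma sigN_comm (ε : Bool) (k m : ℕ) (h : k + 2 ≤ m ∨ m + 2 ≤ k) :
    rhoN (n := n) k * sigN ε m = sigN ε m * rhoN k := by
  unfold rhoN sigN
  split
  · split
    · cases ε
      · simpa [sρ, sσi] using gen_comm (.r ⟨k, by omega⟩) (.si ⟨m, by omega⟩) h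
      · simpa [sρ, sσ] using gen_comm (.r ⟨k, by omega⟩) (.s ⟨m, by omega⟩) h
    · simp
  · simp

lemma tauN_comm (k m : ℕ) (h : k + 2 ≤ m ∨ m + 2 ≤ k) :
    rhoN (n := n) k * tauN m = tauN m * rhoN k := by
  unfold rhoN tauN
  split
  · split
    · exact gen_comm (.r ⟨k, by omega⟩) (.t ⟨m, by omega⟩) h
    · simp
  · simp

lemma tauN_mix (k : ℕ) (h : k + 1 < n - 1) :
    rhoN (n := n) k * tauN (k + 1) * rhoN k = rhoN (k + 1) * tauN k * rhoN (k + 1) := by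
  have hk : k < n - 1 := by omega
  simp only [rhoN, tauN, dif_pos h, dif_pos hk]
  exact mix_rt ⟨k, hk⟩ h

lemma sigN_mix (ε : Bool) (k : ℕ) (h : k + 1 < n - 1) :
    rhoN (n := n) k * sigN ε (k + 1) * rhoN k = rhoN (k + 1) * sigN ε k * rhoN (k + 1) := by
  have hk : k < n - 1 := by omega
  have hs := mix_rs (n := n) ⟨k, hk⟩ h
  cases ε
  · -- σ⁻¹ case, derived by uniqueness of inverses
    simp only [rhoN, sigN, dif_pos h, dif_pos hk, if_neg (by simp : ¬ (false = true))]
    set ρa := sρ (n := n) ⟨k, hk⟩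
    set ρb := sρ (n := n) ⟨k + 1, h⟩
    have hρa : ρa * ρa = 1 := rho_rho _
    have hρb : ρb * ρb = 1 := rho_rho _
    have h1 : (ρa * sσi ⟨k+1, h⟩ * ρa) * (ρa * sσ ⟨k+1, h⟩ * ρa) = 1 := by
      calc (ρa * sσi ⟨k+1, h⟩ * ρa) * (ρa * sσ ⟨k+1, h⟩ * ρa)
          = ρa * sσi ⟨k+1, h⟩ * (ρa * ρa) * sσ ⟨k+1, h⟩ * ρa := by
            simp [mul_assoc]
        _ = ρa * (sσi ⟨k+1, h⟩ * sσ ⟨k+1, h⟩) * ρa := by rw [hρa]; simp [mul_assoc]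
        _ = 1 := by rw [sigi_sig]; simpa using hρa
    have h2 : (ρb * sσ ⟨k, hk⟩ * ρb) * (ρb * sσi ⟨k, hk⟩ * ρb) = 1 := by
      calc (ρb * sσ ⟨k, hk⟩ * ρb) * (ρb * sσi ⟨k, hk⟩ * ρb)
          = ρb * sσ ⟨k, hk⟩ * (ρb * ρb) * sσi ⟨k, hk⟩ * ρb := by simp [mul_assoc]
        _ = ρb * (sσ ⟨k, hk⟩ * sσi ⟨k, hk⟩) * ρb := by rw [hρb]; simp [mul_assoc]
        _ = 1 := by rw [sig_sigi]; simpa using hρb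
    rw [← hs] at h2
    exact left_inv_eq_right_inv h1 h2
  · simp only [rhoN, sigN, dif_pos h, dif_pos hk, if_pos rfl]
    exact hs

end Aux

/-! ### Conjugation by `ρ_k` as a monoid homomorphism -/

section Conj

variable {n : ℕ}

/-- Conjugation by the involution `ρ_k`, as a monoid homomorphism. -/
def cρ (k : ℕ) : SVB n →* SVB n where
  toFun x := rhoN k * x * rhoN k
  map_one' := show rhoN (n := n) k * 1 * rhoN k = 1 by rw [mul_one, rhoN_sq]
  map_mul' x y := by
    show rhoN (n := n) k * (x * y) * rhoN k = rhoN k * x * rhoN k * (rhoN k * y * rhoN k)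
    have h : rhoN (n := n) k * x * rhoN k * (rhoN k * y * rhoN k)
        = rhoN k * (x * ((rhoN k * rhoN k) * y)) * rhoN k := by
      simp [mul_assoc]
    rw [h, rhoN_sq, one_mul]

lemma cρ_apply (k : ℕ) (x : SVB n) : cρ k x = rhoN k * x * rhoN k := rfl

lemma cρ_invol (k : ℕ) (x : SVB n) : cρ k (cρ k x) = x := by
  have h : rhoN (n := n) k * (rhoN k * x * rhoN k) * rhoN k
      = (rhoN k * rhoN k) * x * (rhoN k * rhoN k) := by simp [mul_assoc]
  rw [cρ_apply, cρ_apply, h, rhoN_sq, one_mul, mul_one]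

lemma cρ_fix (k : ℕ) (x : SVB n) (h : rhoN k * x = x * rhoN k) : cρ k x = x := by
  rw [cρ_apply, h, mul_assoc, rhoN_sq, mul_one]

lemma cρ_rho_self (k : ℕ) : cρ k (rhoN (n := n) k) = rhoN k := cρ_fix _ _ rfl

lemma cρ_rho_far (k m : ℕ) (h : k + 2 ≤ m ∨ m + 2 ≤ k) :
    cρ k (rhoN (n := n) m) = rhoN m := cρ_fix _ _ (rhoN_comm k m h)

lemma cρ_braid (k : ℕ) (h : k + 1 < n - 1) :
    cρ k (rhoN (n := n) (k + 1)) = cρ (k + 1) (rhoN k) := by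
  rw [cρ_apply, cρ_apply]; exact rhoN_braid k h

lemma cρ_braid_conj (k : ℕ) (h : k + 1 < n - 1) (z : SVB n) :
    cρ k (cρ (k + 1) (cρ k z)) = cρ (k + 1) (cρ k (cρ (k + 1) z)) := by
  calc cρ k (cρ (k + 1) (cρ k z))
      = cρ k (rhoN (k + 1) * cρ k z * rhoN (k + 1)) := rfl
    _ = cρ k (rhoN (k + 1)) * cρ k (cρ k z) * cρ k (rhoN (k + 1)) := by
        rw [map_mul, map_mul]
    _ = cρ (k + 1) (rhoN k) * z * cρ (k + 1) (rhoN k) := by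
        rw [cρ_braid k h, cρ_invol]
    _ = cρ (k + 1) (rhoN k) * cρ (k + 1) (cρ (k + 1) z) * cρ (k + 1) (rhoN k) := by
        rw [cρ_invol]
    _ = cρ (k + 1) (rhoN k * cρ (k + 1) z * rhoN k) := by rw [map_mul, map_mul]
    _ = cρ (k + 1) (cρ k (cρ (k + 1) z)) := rfl

/-! ### Chains -/

lemma chain_nil (a b : ℕ) (h : b ≤ a + 1) : chain n a b = [] := by
  unfold chain
  rw [show b - a - 1 = 0 by omega]
  rfl

lemma chain_cons (a b : ℕ) (h : a + 1 < b) :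
    chain n a b = rhoN (a + 1) :: chain n (a + 1) b := by
  unfold chain
  rw [show b - a - 1 = (b - (a + 1) - 1) + 1 by omega]
  rfl

lemma chain_concat (a b : ℕ) (h : a + 1 ≤ b) :
    chain n a (b + 1) = chain n a b ++ [rhoN b] := by
  unfold chain
  have h2 := List.range'_append_1 (s := a + 1) (m := b - a - 1) (n := 1)
  rw [show a + 1 + (b - a - 1) = b by omega, show (b - a - 1) + 1 = b + 1 - a - 1 by omega]
    at h2
  rw [← h2, List.map_append]
  rfl

lemma chain_split (a b k : ℕ) (h1 : a < k) (h2 : k + 2 ≤ b) :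
    chain n a b = chain n a k ++ rhoN k :: rhoN (k + 1) :: chain n (k + 1) b := by
  unfold chain
  have h3 := List.range'_append_1 (s := a + 1) (m := k - a - 1) (n := b - k)
  rw [show a + 1 + (k - a - 1) = k by omega,
    show (k - a - 1) + (b - k) = b - a - 1 by omega] at h3
  rw [← h3, List.map_append]
  congr 1
  rw [show b - k = (b - (k + 1) - 1) + 1 + 1 by omega]
  rfl

lemma mem_chain {a b : ℕ} {x : SVB n} (hx : x ∈ chain n a b) :
    ∃ m, a < m ∧ m < b ∧ x = rhoN m := by
  unfold chain at hx
  obtain ⟨m, hm, rfl⟩ := List.mem_map.mp hx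
  rw [List.mem_range'_1] at hm
  exact ⟨m, by omega, by omega, rfl⟩

lemma prod_map_fix {M : Type*} [Monoid M] (f : M →* M) (l : List M)
    (h : ∀ x ∈ l, f x = x) : f l.prod = l.prod := by
  induction l with
  | nil => simp
  | cons x t ih =>
      simp only [List.prod_cons, map_mul, h x (by simp),
        ih (fun y hy => h y (by simp [hy]))]

lemma cρ_chain_prod (k a b : ℕ) (h : ∀ m, a < m → m < b → cρ k (rhoN (n := n) m) = rhoN m) :
    cρ k (chain n a b).prod = (chain n a b).prod := by
  refine prod_map_fix _ _ fun x hx => ?_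
  obtain ⟨m, hm1, hm2, rfl⟩ := mem_chain hx
  exact h m hm1 hm2

lemma cρ_chain_rev_prod (k a b : ℕ)
    (h : ∀ m, a < m → m < b → cρ k (rhoN (n := n) m) = rhoN m) :
    cρ k (chain n a b).reverse.prod = (chain n a b).reverse.prod := by
  refine prod_map_fix _ _ fun x hx => ?_
  obtain ⟨m, hm1, hm2, rfl⟩ := mem_chain (List.mem_reverse.mp hx)
  exact h m hm1 hm2

/-- The sandwich `ρ_{b-1}⋯ρ_{a+1} ⬝ M ⬝ ρ_{a+1}⋯ρ_{b-1}`. -/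
def conjCh (a b : ℕ) (M : SVB n) : SVB n :=
  (chain n a b).reverse.prod * M * (chain n a b).prod

lemma conjCh_nil (a b : ℕ) (h : b ≤ a + 1) (M : SVB n) : conjCh a b M = M := by
  rw [conjCh, chain_nil a b h]
  simp

lemma conjCh_cons (a b : ℕ) (h : a + 1 < b) (M : SVB n) :
    conjCh a b M = conjCh (a + 1) b (cρ (a + 1) M) := by
  rw [conjCh, conjCh, chain_cons a b h, cρ_apply]
  simp [mul_assoc]

lemma conjCh_concat (a b : ℕ) (h : a + 1 ≤ b) (M : SVB n) :
    conjCh a (b + 1) M = cρ b (conjCh a b M) := by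
  rw [conjCh, conjCh, chain_concat a b h, cρ_apply]
  simp [mul_assoc]

lemma cρ_conjCh (k a b : ℕ) (h : ∀ m, a < m → m < b → cρ k (rhoN (n := n) m) = rhoN m)
    (M : SVB n) : cρ k (conjCh a b M) = conjCh a b (cρ k M) := by
  rw [conjCh, conjCh, map_mul, map_mul, cρ_chain_prod k a b h, cρ_chain_rev_prod k a b h]

lemma cρ_conjCh_mid (k a b : ℕ) (h1 : a + 1 ≤ k) (h2 : k + 2 ≤ b) (hk : k + 1 < n - 1)
    (M : SVB n) (hM : cρ (k + 1) M = M) : cρ k (conjCh a b M) = conjCh a b M := by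
  set D := chain n a k with hD
  set E := chain n (k + 1) b with hE
  set Z := conjCh a k M with hZ
  have hsplit : chain n a b = D ++ rhoN k :: rhoN (k + 1) :: E :=
    chain_split a b k (by omega) h2
  have hW : conjCh a b M = E.reverse.prod * cρ (k + 1) (cρ k Z) * E.prod := by
    rw [conjCh, hsplit, cρ_apply, cρ_apply, hZ, conjCh]
    simp [mul_assoc]
    rfl
  have hZfix : cρ (k + 1) Z = Z := by
    rw [hZ, cρ_conjCh (k + 1) a k (fun m hm1 hm2 => cρ_rho_far _ _ (by omega)), hM]
  have hEfix : ∀ m, k + 1 < m → m < b → cρ k (rhoN (n := n) m) = rhoN m :=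
    fun m hm1 _ => cρ_rho_far _ _ (by omega)
  rw [hW, map_mul, map_mul, cρ_chain_prod k (k + 1) b hEfix,
    cρ_chain_rev_prod k (k + 1) b hEfix, cρ_braid_conj k hk, hZfix]

lemma cρ_conjCh_far (k a b : ℕ) (h : k + 2 ≤ a + 1 ∨ b + 1 ≤ k) (M : SVB n)
    (hM : cρ k M = M) : cρ k (conjCh a b M) = conjCh a b M := by
  rw [cρ_conjCh k a b (fun m hm1 hm2 => cρ_rho_far _ _ (by omega)), hM]

end Conj

/-! ### A generic family of generators interacting with the `ρ`'s -/

section GFam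

variable {n : ℕ} (g : ℕ → SVB n)
variable (Hc : ∀ k m : ℕ, k + 2 ≤ m ∨ m + 2 ≤ k → rhoN (n := n) k * g m = g m * rhoN k)
variable (Hm : ∀ k : ℕ, k + 1 < n - 1 →
  rhoN (n := n) k * g (k + 1) * rhoN k = rhoN (k + 1) * g k * rhoN (k + 1))

include Hc in
lemma cρ_g_far (k m : ℕ) (h : k + 2 ≤ m ∨ m + 2 ≤ k) : cρ k (g m) = g m :=
  cρ_fix _ _ (Hc k m h)

include Hm in
lemma cρ_g_mix (k : ℕ) (h : k + 1 < n - 1) : cρ k (g (k + 1)) = cρ (k + 1) (g k) := by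
  rw [cρ_apply, cρ_apply]; exact Hm k h

include Hm in
lemma gI4 (k : ℕ) (h : k + 1 < n - 1) : cρ k (cρ (k + 1) (g k)) = g (k + 1) := by
  have := congrArg (cρ k) (cρ_g_mix g Hm k h)
  rwa [cρ_invol, eq_comm] at this

include Hm in
lemma gI2 (k : ℕ) (h : k + 1 < n - 1) :
    cρ k (cρ (k + 1) (g (k + 1))) = cρ (k + 1) (cρ k (g k)) := by
  calc cρ k (cρ (k + 1) (g (k + 1)))
      = cρ k (rhoN (k + 1) * g (k + 1) * rhoN (k + 1)) := rfl
    _ = cρ k (rhoN (k + 1)) * cρ k (g (k + 1)) * cρ k (rhoN (k + 1)) := by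
        rw [map_mul, map_mul]
    _ = cρ (k + 1) (rhoN k) * cρ (k + 1) (g k) * cρ (k + 1) (rhoN k) := by
        rw [cρ_braid k h, cρ_g_mix g Hm k h]
    _ = cρ (k + 1) (rhoN k * g k * rhoN k) := by rw [map_mul, map_mul]
    _ = cρ (k + 1) (cρ k (g k)) := rfl

include Hm in
lemma gI3 (k : ℕ) (h : k + 1 < n - 1) :
    cρ k (cρ (k + 1) (cρ k (g k))) = cρ (k + 1) (g (k + 1)) := by
  rw [cρ_braid_conj k h, gI4 g Hm k h]

/-- The element `X_{a,b}` (for the family `g`), ℕ-indexed. -/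
def XGn (a b : ℕ) : SVB n :=
  if a < b then conjCh a b (cρ a (g a)) else conjCh b a (g b)

/-- The image of a strand under the transposition `(K, K+1)`, ℕ-indexed. -/
def swN (K x : ℕ) : ℕ := if x = K then K + 1 else if x = K + 1 then K else x

lemma swN_self (K x : ℕ) (h1 : x ≠ K) (h2 : x ≠ K + 1) : swN K x = x := by
  simp [swN, h1, h2]

include Hc in
lemma cρ_cρg_far (k a : ℕ) (h : k + 2 ≤ a ∨ a + 2 ≤ k) :
    cρ k (cρ a (g a)) = cρ a (g a) := by
  rw [cρ_apply a, map_mul, map_mul, cρ_rho_far k a h, cρ_g_far g Hc k a h]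

include Hc Hm in
theorem swap_step (K a b : ℕ) (hK : K < n - 1) (ha : a < n) (hb : b < n) (hab : a ≠ b) :
    cρ K (XGn g a b) = XGn g (swN K a) (swN K b) := by
  rcases lt_or_gt_of_ne hab with hlt | hgt
  · -- a < b : the `A`-form
    rw [XGn, if_pos hlt]
    rcases (show K + 2 ≤ a ∨ K + 1 = a ∨ (K = a ∧ b = a + 1) ∨ (K = a ∧ a + 2 ≤ b) ∨
        (a + 1 ≤ K ∧ K + 2 ≤ b) ∨ (a + 1 ≤ K ∧ K + 1 = b) ∨ K = b ∨ b + 1 ≤ K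
        by omega) with h | h | ⟨h, h'⟩ | ⟨h, h'⟩ | ⟨h, h'⟩ | ⟨h, h'⟩ | h | h
    · -- K + 2 ≤ a : far
      rw [swN_self K a (by omega) (by omega), swN_self K b (by omega) (by omega),
        XGn, if_pos hlt]
      exact cρ_conjCh_far K a b (by omega) _ (cρ_cρg_far g Hc K a (by omega))
    · -- K + 1 = a
      subst h
      rw [show swN K (K + 1) = K by simp [swN], swN_self K b (by omega) (by omega),
        XGn, if_pos (by omega), conjCh_cons K b (by omega),
        cρ_conjCh K (K + 1) b (fun m h1 h2 => cρ_rho_far _ _ (by omega)),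
        gI2 g Hm K (by omega)]
    · -- K = a, b = a + 1
      subst h; subst h'
      rw [show swN K K = K + 1 by simp [swN], show swN K (K + 1) = K by simp [swN],
        XGn, if_neg (by omega), conjCh_nil _ _ (by omega), conjCh_nil _ _ (by omega),
        cρ_invol]
    · -- K = a, a + 2 ≤ b
      subst h
      rw [show swN K K = K + 1 by simp [swN], swN_self K b (by omega) (by omega),
        XGn, if_pos (by omega), conjCh_cons K b (by omega),
        cρ_conjCh K (K + 1) b (fun m h1 h2 => cρ_rho_far _ _ (by omega)),
        gI3 g Hm K (by omega)]
    · -- a + 1 ≤ K, K + 2 ≤ b : middle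
      rw [swN_self K a (by omega) (by omega), swN_self K b (by omega) (by omega),
        XGn, if_pos hlt]
      exact cρ_conjCh_mid K a b h h' (by omega) _ (cρ_cρg_far g Hc (K + 1) a (by omega))
    · -- a + 1 ≤ K, K + 1 = b : shrink
      rw [swN_self K a (by omega) (by omega), show swN K b = K by rw [h'.symm]; simp [swN],
        XGn, if_pos (by omega), show b = K + 1 from h'.symm,
        conjCh_concat a K (by omega), cρ_invol]
    · -- K = b : grow
      subst h
      rw [swN_self K a (by omega) (by omega), show swN K K = K + 1 by simp [swN],
        XGn, if_pos (by omega), conjCh_concat a K (by omega)]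
    · -- b + 1 ≤ K : far
      rw [swN_self K a (by omega) (by omega), swN_self K b (by omega) (by omega),
        XGn, if_pos hlt]
      exact cρ_conjCh_far K a b (by omega) _ (cρ_cρg_far g Hc K a (by omega))
  · -- b < a : the `B`-form
    rw [XGn, if_neg (by omega)]
    rcases (show K + 2 ≤ b ∨ K + 1 = b ∨ (K = b ∧ a = b + 1) ∨ (K = b ∧ b + 2 ≤ a) ∨
        (b + 1 ≤ K ∧ K + 2 ≤ a) ∨ (b + 1 ≤ K ∧ K + 1 = a) ∨ K = a ∨ a + 1 ≤ K
        by omega) with h | h | ⟨h, h'⟩ | ⟨h, h'⟩ | ⟨h, h'⟩ | ⟨h, h'⟩ | h | h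
    · -- K + 2 ≤ b : far
      rw [swN_self K a (by omega) (by omega), swN_self K b (by omega) (by omega),
        XGn, if_neg (by omega)]
      exact cρ_conjCh_far K b a (by omega) _ (cρ_g_far g Hc K b (by omega))
    · -- K + 1 = b
      subst h
      rw [show swN K (K + 1) = K by simp [swN], swN_self K a (by omega) (by omega),
        XGn, if_neg (by omega), conjCh_cons K a (by omega),
        cρ_conjCh K (K + 1) a (fun m h1 h2 => cρ_rho_far _ _ (by omega)),
        cρ_g_mix g Hm K (by omega)]
    · -- K = b, a = K + 1
      subst h; subst h'
      rw [show swN K K = K + 1 by simp [swN], show swN K (K + 1) = K by simp [swN],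
        XGn, if_pos (by omega), conjCh_nil _ _ (by omega), conjCh_nil _ _ (by omega)]
    · -- K = b, b + 2 ≤ a
      subst h
      rw [show swN K K = K + 1 by simp [swN], swN_self K a (by omega) (by omega),
        XGn, if_neg (by omega), conjCh_cons K a (by omega),
        cρ_conjCh K (K + 1) a (fun m h1 h2 => cρ_rho_far _ _ (by omega)),
        gI4 g Hm K (by omega)]
    · -- b + 1 ≤ K, K + 2 ≤ a : middle
      rw [swN_self K a (by omega) (by omega), swN_self K b (by omega) (by omega),
        XGn, if_neg (by omega)]
      exact cρ_conjCh_mid K b a h h' (by omega) _ (cρ_g_far g Hc (K + 1) b (by omega))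
    · -- b + 1 ≤ K, K + 1 = a : shrink
      rw [show swN K a = K by rw [h'.symm]; simp [swN], swN_self K b (by omega) (by omega),
        XGn, if_neg (by omega), show a = K + 1 from h'.symm,
        conjCh_concat b K (by omega), cρ_invol]
    · -- K = a : grow
      subst h
      rw [show swN K K = K + 1 by simp [swN], swN_self K b (by omega) (by omega),
        XGn, if_neg (by omega), conjCh_concat b K (by omega)]
    · -- a + 1 ≤ K : far
      rw [swN_self K a (by omega) (by omega), swN_self K b (by omega) (by omega),
        XGn, if_neg (by omega)]
      exact cρ_conjCh_far K b a (by omega) _ (cρ_g_far g Hc K b (by omega))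

end GFam

/-! ### From ℕ-indexed statements to `Fin`-indexed statements -/

section FinLevel

variable {n : ℕ}

lemma rhoN_fin (k : Fin (n - 1)) : rhoN (n := n) (k : ℕ) = sρ k := by
  simp [rhoN, k.isLt]

lemma Xe_eq (i j : Fin n) (ε : Bool) : Xe i j ε = XGn (sigN ε) (i : ℕ) (j : ℕ) := by
  unfold Xe XGn conjCh
  rcases lt_or_ge (i : ℕ) (j : ℕ) with h | h
  · rw [if_pos h, if_pos h, cρ_apply]
    simp [mul_assoc]
  · rw [if_neg (not_lt.mpr h), if_neg (not_lt.mpr h)]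

lemma Ye_eq (i j : Fin n) : Ye i j = XGn tauN (i : ℕ) (j : ℕ) := by
  unfold Ye XGn conjCh
  rcases lt_or_ge (i : ℕ) (j : ℕ) with h | h
  · rw [if_pos h, if_pos h, cρ_apply]
    simp [mul_assoc]
  · rw [if_neg (not_lt.mpr h), if_neg (not_lt.mpr h)]

lemma swapAdj_coe (k : Fin (n - 1)) (x : Fin n) :
    ((swapAdj k x : Fin n) : ℕ) = swN (k : ℕ) (x : ℕ) := by
  unfold swapAdj swN
  rw [Equiv.swap_apply_def]
  split_ifs <;> simp_all [stA, stB, Fin.ext_iff]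

lemma perm_mem_closure (hn : 2 ≤ n) (π : Equiv.Perm (Fin n)) :
    π ∈ Submonoid.closure (Set.range (swapAdj (n := n))) := by
  obtain ⟨m, rfl⟩ : ∃ m, n = m + 1 := ⟨n - 1, by omega⟩
  have hr : ∀ i : Fin m, swapAdj (n := m + 1) i = Equiv.swap i.castSucc i.succ := by
    intro i
    unfold swapAdj
    congr 1
  have hrange : Set.range (swapAdj (n := m + 1)) =
      Set.range (fun i : Fin m => Equiv.swap i.castSucc i.succ) :=
    congrArg Set.range (funext hr)
  rw [hrange, Equiv.Perm.mclosure_swap_castSucc_succ m]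
  exact Submonoid.mem_top π

lemma swapAdj_inv (k : Fin (n - 1)) : (swapAdj (n := n) k)⁻¹ = swapAdj k := by
  unfold swapAdj
  exact Equiv.swap_inv _ _

variable (τsec : Equiv.Perm (Fin n) →* (SVB n)ˣ)
variable (hτ : ∀ i : Fin (n - 1), ((τsec (swapAdj i) : (SVB n)ˣ) : SVB n) = sρ i)

include hτ in
lemma conj_all (hn : 2 ≤ n) (g : ℕ → SVB n)
    (Hc : ∀ k m : ℕ, k + 2 ≤ m ∨ m + 2 ≤ k → rhoN (n := n) k * g m = g m * rhoN k)
    (Hm : ∀ k : ℕ, k + 1 < n - 1 →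
      rhoN (n := n) k * g (k + 1) * rhoN k = rhoN (k + 1) * g k * rhoN (k + 1)) :
    ∀ (π : Equiv.Perm (Fin n)) (i j : Fin n), i ≠ j →
      ↑(τsec π) * XGn g (i : ℕ) (j : ℕ) * ↑(τsec π)⁻¹ = XGn g ((π i : Fin n) : ℕ) ((π j : Fin n) : ℕ) := by
  intro π
  induction perm_mem_closure hn π using Submonoid.closure_induction with
  | mem x hx =>
      obtain ⟨k, rfl⟩ := hx
      intro i j hij
      have hinv : ((τsec (swapAdj k))⁻¹ : (SVB n)ˣ) = τsec (swapAdj k) := by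
        rw [← map_inv, swapAdj_inv]
      rw [hinv, hτ k, ← rhoN_fin k]
      have hs := swap_step g Hc Hm (k : ℕ) (i : ℕ) (j : ℕ) k.isLt i.isLt j.isLt
        (Fin.val_ne_of_ne hij)
      rw [cρ_apply] at hs
      rw [swapAdj_coe k i, swapAdj_coe k j]
      exact hs
  | one =>
      intro i j hij
      simp
  | mul x y hx hy ihx ihy =>
      intro i j hij
      have key : ((τsec (x * y) : (SVB n)ˣ) : SVB n) = ↑(τsec x) * ↑(τsec y) := by
        rw [map_mul, Units.val_mul]
      have keyinv : ((τsec (x * y))⁻¹ : (SVB n)ˣ) = (τsec y)⁻¹ * (τsec x)⁻¹ := by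
        rw [map_mul, mul_inv_rev]
      rw [key, keyinv, Units.val_mul]
      calc ↑(τsec x) * ↑(τsec y) * XGn g (i : ℕ) (j : ℕ) * (↑(τsec y)⁻¹ * ↑(τsec x)⁻¹)
          = ↑(τsec x) * (↑(τsec y) * XGn g (i : ℕ) (j : ℕ) * ↑(τsec y)⁻¹) * ↑(τsec x)⁻¹ := by
            simp [mul_assoc]
        _ = ↑(τsec x) * XGn g ((y i : Fin n) : ℕ) ((y j : Fin n) : ℕ) * ↑(τsec x)⁻¹ := by
            rw [ihy i j hij]
        _ = XGn g ((x (y i) : Fin n) : ℕ) ((x (y j) : Fin n) : ℕ) := by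
            exact ihx (y i) (y j) (fun h => hij (y.injective h))
        _ = XGn g (((x * y) i : Fin n) : ℕ) (((x * y) j : Fin n) : ℕ) := by
            rw [Equiv.Perm.mul_apply, Equiv.Perm.mul_apply]

end FinLevel

section Theta

variable {n : ℕ}

lemma theta_tau (hn : 2 ≤ n) (θ : SVB n →* Equiv.Perm (Fin n))
    (hθ : ∀ i : Fin (n - 1),
      θ (sσ i) = swapAdj i ∧ θ (sσi i) = swapAdj i ∧ θ (sρ i) = swapAdj i ∧
        θ (sτ i) = swapAdj i)
    (τsec : Equiv.Perm (Fin n) →* (SVB n)ˣ)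
    (hτ : ∀ i : Fin (n - 1), ((τsec (swapAdj i) : (SVB n)ˣ) : SVB n) = sρ i)
    (π : Equiv.Perm (Fin n)) : θ ↑(τsec π) = π := by
  induction perm_mem_closure hn π using Submonoid.closure_induction with
  | mem x hx =>
      obtain ⟨k, rfl⟩ := hx
      rw [hτ k, (hθ k).2.2.1]
  | one => simp
  | mul x y hx hy ihx ihy =>
      rw [map_mul, Units.val_mul, map_mul, ihx, ihy]

end Theta

/-- `SVB_n = SVP_n ⋊ S_n`: conjugation by the section `τ : S_n → SVB_n`
permutes the pure generators by `π · X_{i,j} = X_{π(i),π(j)}`, `π · Y_{i,j} = Y_{π(i),π(j)}`,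
and the multiplication map `SVP_n × S_n → SVB_n, (p, π) ↦ p·τ(π)` is a bijection. -/
theorem SVB_semidirect_SVP_Sn (n : ℕ) (hn : 2 ≤ n)
    (θ : SVB n →* Equiv.Perm (Fin n))
    (hθ : ∀ i : Fin (n - 1),
      θ (sσ i) = swapAdj i ∧ θ (sσi i) = swapAdj i ∧ θ (sρ i) = swapAdj i ∧
        θ (sτ i) = swapAdj i)
    (τsec : Equiv.Perm (Fin n) →* (SVB n)ˣ)
    (hτ : ∀ i : Fin (n - 1), ((τsec (swapAdj i) : (SVB n)ˣ) : SVB n) = sρ i) :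
    (∀ (π : Equiv.Perm (Fin n)) (i j : Fin n), i ≠ j → ∀ ε : Bool,
      ↑(τsec π) * Xe i j ε * ↑(τsec π)⁻¹ = Xe (π i) (π j) ε) ∧
    (∀ (π : Equiv.Perm (Fin n)) (i j : Fin n), i ≠ j →
      ↑(τsec π) * Ye i j * ↑(τsec π)⁻¹ = Ye (π i) (π j)) ∧
    Function.Bijective
      (fun p : MonoidHom.mker θ × Equiv.Perm (Fin n) => (p.1 : SVB n) * ↑(τsec p.2)) := by
  have hθτ : ∀ π : Equiv.Perm (Fin n), θ ↑(τsec π) = π := theta_tau hn θ hθ τsec hτ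
  have hθτinv : ∀ π : Equiv.Perm (Fin n), θ ↑(τsec π)⁻¹ = π⁻¹ := by
    intro π
    rw [← map_inv]
    exact hθτ π⁻¹
  refine ⟨?_, ?_, ?_, ?_⟩
  · -- conjugation on the X generators
    intro π i j hij ε
    rw [Xe_eq, Xe_eq]
    exact conj_all τsec hτ hn (sigN ε) (sigN_comm ε) (sigN_mix ε) π i j hij
  · -- conjugation on the Y generators
    intro π i j hij
    rw [Ye_eq, Ye_eq]
    exact conj_all τsec hτ hn tauN tauN_comm tauN_mix π i j hij
  · -- injectivity
    rintro ⟨p, π⟩ ⟨p', π'⟩ h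
    simp only at h
    have hπ : π = π' := by
      have h2 := congrArg θ h
      rw [map_mul, map_mul, hθτ, hθτ, MonoidHom.mem_mker.mp p.2,
        MonoidHom.mem_mker.mp p'.2, one_mul, one_mul] at h2
      exact h2
    subst hπ
    have hp : (p : SVB n) = (p' : SVB n) :=
      (Units.mul_left_inj (τsec π)).mp h
    exact Prod.ext (Subtype.ext hp) rfl
  · -- surjectivity
    intro x
    refine ⟨⟨⟨x * ↑(τsec (θ x))⁻¹, ?_⟩, θ x⟩, ?_⟩
    · rw [MonoidHom.mem_mker, map_mul, hθτinv, mul_inv_cancel]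
    · show x * ↑(τsec (θ x))⁻¹ * ↑(τsec (θ x)) = x
      rw [mul_assoc, Units.inv_mul, mul_one]


end SVBPaper
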